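/- Let n(t) := (cos t, sin t, 0) and fix κ² > 0. There exist constants C₁, C₂ > 0 such that for every C¹ 2π-periodic u : ℝ → ℝ³, C₁ ( ∫_{−π}^{π} |u(t)|² dt + ∫_{−π}^{π} |u'(t)|² dt ) ≤ ∫_{−π}^{π} |u'(t)|² dt + κ² ∫_{−π}^{π} |u(t) × n(t)|² dt ≤ C₂ ( ∫_{−π}^{π} |u(t)|² dt + ∫_{−π}^{π} |u'(t)|² dt ). In particular, u ↦ ( ∫ |u'|² + κ² ∫ |u × n|² )^{1/2} defines a norm equivalent to the standard H¹ norm. -/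

import Mathlib

open Real Set MeasureTheory intervalIntegral

/-- Squared Euclidean norm of a vector in `ℝ³`. -/
noncomputable def sq3 (v : Fin 3 → ℝ) : ℝ := v 0 ^ 2 + v 1 ^ 2 + v 2 ^ 2

/-- The outward unit normal `n(t) = (cos t, sin t, 0)` to the unit circle. -/
noncomputable def nvec (t : ℝ) : Fin 3 → ℝ := ![Real.cos t, Real.sin t, 0]

/-- **Equivalence of norms**: for every `κ² > 0` there are constants
`C₁, C₂ > 0` such that for all `C¹` `2π`-periodic `u : ℝ → ℝ³`,
`C₁ ‖u‖²_{H¹} ≤ ∫ |u'|² + κ² ∫ |u × n|² ≤ C₂ ‖u‖²_{H¹}`; i.e., the energy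
defines a norm equivalent to the standard `H¹` norm. -/

lemma sq_integral_le (g : ℝ → ℝ) (hg : Continuous g) :
    (∫ t in (-π)..π, g t) ^ 2 ≤ (2 * π) * ∫ t in (-π)..π, (g t) ^ 2 := by
  have hpi : (0:ℝ) < 2 * π := by positivity
  set I := ∫ t in (-π)..π, g t with hI
  set m : ℝ := I / (2 * π) with hm
  have h0 : 0 ≤ ∫ t in (-π)..π, (g t - m) ^ 2 :=
    intervalIntegral.integral_nonneg (by linarith [pi_pos]) (fun t _ => sq_nonneg _)
  have hexp : ∫ t in (-π)..π, (g t - m) ^ 2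
      = (∫ t in (-π)..π, (g t) ^ 2) - 2 * m * I + m ^ 2 * (2 * π) := by
    have h1 : ∀ t, (g t - m) ^ 2 = (g t) ^ 2 - (2 * m) * g t + m ^ 2 := by intro t; ring
    rw [intervalIntegral.integral_congr (fun t _ => h1 t)]
    rw [intervalIntegral.integral_add, intervalIntegral.integral_sub,
      intervalIntegral.integral_const_mul, intervalIntegral.integral_const]
    · simp [← hI]; ring
    · exact (hg.pow 2).intervalIntegrable _ _
    · exact (continuous_const.mul hg).intervalIntegrable _ _
    · exact ((hg.pow 2).sub (continuous_const.mul hg)).intervalIntegrable _ _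
    · exact intervalIntegrable_const
  rw [hexp] at h0
  have h2 : m * (2 * π) = I := by rw [hm]; field_simp
  nlinarith [sq_nonneg m, sq_nonneg I]

lemma poincare_aux (a f : ℝ → ℝ) (hf : Continuous f)
    (ha : ∀ t, HasDerivAt a (f t) t) :
    ∫ t in (-π)..π, (a t) ^ 2 ≤
      4 * π ^ 2 * (∫ t in (-π)..π, (f t) ^ 2) + (∫ t in (-π)..π, a t) ^ 2 / (2 * π) := by
  have hpi : (0:ℝ) < π := pi_pos
  have hle : -π ≤ π := by linarith
  have hac : Continuous a :=
    continuous_iff_continuousAt.2 fun t => (ha t).differentiableAt.continuousAt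
  set M : ℝ := ∫ t in (-π)..π, |f t| with hM
  set I : ℝ := ∫ t in (-π)..π, a t with hI
  have hMnn : 0 ≤ M :=
    intervalIntegral.integral_nonneg hle (fun t _ => abs_nonneg _)
  -- key pointwise bound
  have key : ∀ t ∈ Icc (-π) π, ∀ s ∈ Icc (-π) π, |a t - a s| ≤ M := by
    intro t ht s hs
    have hftc : a t - a s = ∫ x in s..t, f x :=
      (intervalIntegral.integral_eq_sub_of_hasDerivAt (fun x _ => ha x)
        (hf.intervalIntegrable _ _)).symm
    rw [hftc]
    have hsub : Set.uIoc s t ⊆ Set.uIoc (-π) π := by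
      rw [uIoc_of_le hle]
      intro x hx
      rcases Set.mem_uIoc.1 hx with h | h
      · exact ⟨lt_of_le_of_lt hs.1 h.1, h.2.trans ht.2⟩
      · exact ⟨lt_of_le_of_lt ht.1 h.1, h.2.trans hs.2⟩
    have s1 : ‖∫ x in s..t, f x‖ ≤ |∫ x in s..t, ‖f x‖| :=
      intervalIntegral.norm_integral_le_abs_integral_norm
    have s2 : |∫ x in s..t, ‖f x‖| ≤ |∫ x in (-π)..π, ‖f x‖| :=
      intervalIntegral.abs_integral_mono_interval hsub
        (by filter_upwards with x using norm_nonneg _)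
        (hf.norm.intervalIntegrable _ _)
    have s3 : |∫ x in (-π)..π, ‖f x‖| = M := by
      rw [abs_of_nonneg (intervalIntegral.integral_nonneg hle fun x _ => norm_nonneg _)]
      simp [hM, Real.norm_eq_abs]
    rw [Real.norm_eq_abs] at s1
    linarith
  -- bound on |2π a t - I|
  have hdist : ∀ t ∈ Icc (-π) π, (2 * π * a t - I) ^ 2 ≤ (M * (2 * π)) ^ 2 := by
    intro t ht
    have hrepr : 2 * π * a t - I = ∫ s in (-π)..π, (a t - a s) := by
      rw [intervalIntegral.integral_sub intervalIntegrable_const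
        (hac.intervalIntegrable _ _), intervalIntegral.integral_const, ← hI]
      rw [smul_eq_mul]; ring
    have hb : |2 * π * a t - I| ≤ M * (2 * π) := by
      rw [hrepr]
      have := intervalIntegral.norm_integral_le_of_norm_le_const
        (a := -π) (b := π) (C := M) (f := fun s => a t - a s) ?_
      · simpa [abs_of_nonneg (le_of_lt hpi), Real.norm_eq_abs] using
          this.trans (le_of_eq (by rw [abs_of_nonneg]; ring; linarith))
      · intro s hs
        rw [uIoc_of_le hle] at hs
        exact key t ht s ⟨le_of_lt hs.1, hs.2⟩
    calc (2 * π * a t - I) ^ 2 = |2 * π * a t - I| ^ 2 := (sq_abs _).symm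
      _ ≤ (M * (2 * π)) ^ 2 := by
          exact pow_le_pow_left₀ (abs_nonneg _) hb 2
  -- integrate
  have hint : ∫ t in (-π)..π, (2 * π * a t - I) ^ 2 ≤ (M * (2 * π)) ^ 2 * (2 * π) := by
    calc ∫ t in (-π)..π, (2 * π * a t - I) ^ 2
        ≤ ∫ _t in (-π)..π, (M * (2 * π)) ^ 2 := by
          apply intervalIntegral.integral_mono_on hle
          · exact (((continuous_const.mul hac).sub continuous_const).pow 2).intervalIntegrable _ _
          · exact intervalIntegrable_const
          · exact hdist
      _ = (M * (2 * π)) ^ 2 * (2 * π) := by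
          rw [intervalIntegral.integral_const]; simp; ring
  have hexp : ∫ t in (-π)..π, (2 * π * a t - I) ^ 2
      = 4 * π ^ 2 * (∫ t in (-π)..π, (a t) ^ 2) - 2 * π * I ^ 2 := by
    have h1 : ∀ t, (2 * π * a t - I) ^ 2
        = (4 * π ^ 2) * (a t) ^ 2 - (4 * π * I) * a t + I ^ 2 := by intro t; ring
    rw [intervalIntegral.integral_congr (fun t _ => h1 t)]
    rw [intervalIntegral.integral_add, intervalIntegral.integral_sub,
      intervalIntegral.integral_const_mul, intervalIntegral.integral_const_mul,
      intervalIntegral.integral_const]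
    · simp [← hI]; ring
    · exact (continuous_const.mul (hac.pow 2)).intervalIntegrable _ _
    · exact (continuous_const.mul hac).intervalIntegrable _ _
    · exact ((continuous_const.mul (hac.pow 2)).sub
        (continuous_const.mul hac)).intervalIntegrable _ _
    · exact intervalIntegrable_const
  have hM2 : M ^ 2 ≤ 2 * π * ∫ t in (-π)..π, (f t) ^ 2 := by
    have := sq_integral_le (fun t => |f t|) hf.abs
    simpa [sq_abs, hM] using this
  rw [hexp] at hint
  set J := ∫ t in (-π)..π, (a t) ^ 2
  set F := ∫ t in (-π)..π, (f t) ^ 2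
  have hpos : (0:ℝ) < 4 * π ^ 2 := by positivity
  rw [← mul_le_mul_iff_right₀ hpos]
  have heq : 4 * π ^ 2 * (4 * π ^ 2 * F + I ^ 2 / (2 * π))
      = 16 * π ^ 4 * F + 2 * π * I ^ 2 := by
    field_simp; ring
  rw [heq]
  have h5 : 8 * π ^ 3 * M ^ 2 ≤ 8 * π ^ 3 * (2 * π * F) :=
    mul_le_mul_of_nonneg_left hM2 (by positivity)
  nlinarith [hint]

set_option maxHeartbeats 2000000 in
theorem energy_norm_equivalence (κ : ℝ) (hκ : 0 < κ ^ 2) :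
    ∃ C₁ > (0 : ℝ), ∃ C₂ > (0 : ℝ),
      ∀ u : ℝ → Fin 3 → ℝ, ContDiff ℝ 1 u → (∀ t : ℝ, u (t + 2 * π) = u t) →
        C₁ * ((∫ t in (-π)..π, sq3 (u t)) + ∫ t in (-π)..π, sq3 (deriv u t)) ≤
          (∫ t in (-π)..π, sq3 (deriv u t))
            + κ ^ 2 * (∫ t in (-π)..π, sq3 (crossProduct (u t) (nvec t))) ∧
        (∫ t in (-π)..π, sq3 (deriv u t))
            + κ ^ 2 * (∫ t in (-π)..π, sq3 (crossProduct (u t) (nvec t))) ≤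
          C₂ * ((∫ t in (-π)..π, sq3 (u t)) + ∫ t in (-π)..π, sq3 (deriv u t)) := by
  have hpi : (0:ℝ) < π := pi_pos
  have hle : -π ≤ π := by linarith
  set K : ℝ := 8 * π ^ 2 + 1 with hK
  have hKpos : 0 < K := by positivity
  have hK1 : 1 ≤ K := by nlinarith
  set m : ℝ := min 1 (κ ^ 2) with hm
  have hmpos : 0 < m := lt_min one_pos hκ
  refine ⟨m / K, by positivity, max 1 (κ ^ 2), lt_of_lt_of_le one_pos (le_max_left _ _), ?_⟩
  intro u hu hper
  have cu : Continuous u := hu.continuous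
  have cu' : Continuous (deriv u) := hu.continuous_deriv le_rfl
  set a : ℝ → ℝ := fun t => u t 0 * Real.cos t + u t 1 * Real.sin t with ha
  set b : ℝ → ℝ := fun t => -(u t 0) * Real.sin t + u t 1 * Real.cos t with hb
  set c : ℝ → ℝ := fun t => u t 2 with hc
  set p : ℝ → ℝ := fun t => deriv u t 0 * Real.cos t + deriv u t 1 * Real.sin t with hp
  set q : ℝ → ℝ := fun t => -(deriv u t 0) * Real.sin t + deriv u t 1 * Real.cos t with hq
  set r : ℝ → ℝ := fun t => deriv u t 2 with hr
  have ca : Continuous a :=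
    (((continuous_apply 0).comp cu).mul Real.continuous_cos).add
      (((continuous_apply 1).comp cu).mul Real.continuous_sin)
  have cb : Continuous b :=
    ((((continuous_apply 0).comp cu).neg).mul Real.continuous_sin).add
      (((continuous_apply 1).comp cu).mul Real.continuous_cos)
  have cc : Continuous c := (continuous_apply 2).comp cu
  have cp : Continuous p :=
    (((continuous_apply 0).comp cu').mul Real.continuous_cos).add
      (((continuous_apply 1).comp cu').mul Real.continuous_sin)
  have cq : Continuous q :=
    ((((continuous_apply 0).comp cu').neg).mul Real.continuous_sin).add
      (((continuous_apply 1).comp cu').mul Real.continuous_cos)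
  have cr : Continuous r := (continuous_apply 2).comp cu'
  -- derivatives of components
  have hdi : ∀ t i, HasDerivAt (fun s => u s i) (deriv u t i) t := fun t i =>
    hasDerivAt_pi.1 ((hu.differentiable one_ne_zero t).hasDerivAt) i
  have hda : ∀ t, HasDerivAt a (p t + b t) t := by
    intro t
    have h := ((hdi t 0).mul (Real.hasDerivAt_cos t)).add
      ((hdi t 1).mul (Real.hasDerivAt_sin t))
    exact h.congr_deriv (by simp only [hp, hb]; ring)
  have hdb : ∀ t, HasDerivAt b (q t - a t) t := by
    intro t
    have h := (((hdi t 0).neg).mul (Real.hasDerivAt_sin t)).add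
      ((hdi t 1).mul (Real.hasDerivAt_cos t))
    exact h.congr_deriv (by simp only [hq, ha, Pi.neg_apply]; ring)
  -- pointwise identities
  have idU : ∀ t, sq3 (u t) = a t ^ 2 + b t ^ 2 + c t ^ 2 := by
    intro t
    simp only [sq3, ha, hb, hc]
    linear_combination (-(u t 0 ^ 2) - u t 1 ^ 2) * (Real.sin_sq_add_cos_sq t)
  have idD : ∀ t, sq3 (deriv u t) = p t ^ 2 + q t ^ 2 + r t ^ 2 := by
    intro t
    simp only [sq3, hp, hq, hr]
    linear_combination (-(deriv u t 0 ^ 2) - deriv u t 1 ^ 2) * (Real.sin_sq_add_cos_sq t)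
  have idX : ∀ t, sq3 (crossProduct (u t) (nvec t)) = b t ^ 2 + c t ^ 2 := by
    intro t
    simp only [cross_apply, nvec, sq3, hb, hc, Matrix.cons_val_zero, Matrix.cons_val_one,
      Matrix.head_cons, Matrix.cons_val_two, Matrix.tail_cons]
    linear_combination (u t 2 ^ 2) * (Real.sin_sq_add_cos_sq t)
  -- integrals
  set Ia := ∫ t in (-π)..π, a t ^ 2 with hIa
  set Ib := ∫ t in (-π)..π, b t ^ 2 with hIb
  set Ic := ∫ t in (-π)..π, c t ^ 2 with hIc
  set Ip := ∫ t in (-π)..π, p t ^ 2 with hIp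
  set Iq := ∫ t in (-π)..π, q t ^ 2 with hIq
  set Ir := ∫ t in (-π)..π, r t ^ 2 with hIr
  have split3 : ∀ (g₁ g₂ g₃ : ℝ → ℝ), Continuous g₁ → Continuous g₂ → Continuous g₃ →
      (∫ t in (-π)..π, (g₁ t ^ 2 + g₂ t ^ 2 + g₃ t ^ 2))
        = (∫ t in (-π)..π, g₁ t ^ 2) + (∫ t in (-π)..π, g₂ t ^ 2)
          + (∫ t in (-π)..π, g₃ t ^ 2) := by
    intro g₁ g₂ g₃ h₁ h₂ h₃
    rw [intervalIntegral.integral_add (f := fun t => g₁ t ^ 2 + g₂ t ^ 2) (g := fun t => g₃ t ^ 2) (((h₁.pow 2).add (h₂.pow 2)).intervalIntegrable _ _)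
        ((h₃.pow 2).intervalIntegrable _ _),
      intervalIntegral.integral_add (f := fun t => g₁ t ^ 2) (g := fun t => g₂ t ^ 2) ((h₁.pow 2).intervalIntegrable _ _)
        ((h₂.pow 2).intervalIntegrable _ _)]
  have eqS : (∫ t in (-π)..π, sq3 (u t)) = Ia + Ib + Ic := by
    rw [intervalIntegral.integral_congr (fun t _ => idU t)]
    exact split3 a b c ca cb cc
  have eqD : (∫ t in (-π)..π, sq3 (deriv u t)) = Ip + Iq + Ir := by
    rw [intervalIntegral.integral_congr (fun t _ => idD t)]
    exact split3 p q r cp cq cr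
  have eqX : (∫ t in (-π)..π, sq3 (crossProduct (u t) (nvec t))) = Ib + Ic := by
    rw [intervalIntegral.integral_congr (fun t _ => idX t)]
    rw [intervalIntegral.integral_add (f := fun t => b t ^ 2) (g := fun t => c t ^ 2) ((cb.pow 2).intervalIntegrable _ _)
      ((cc.pow 2).intervalIntegrable _ _)]
  -- nonnegativity
  have nn : ∀ (g : ℝ → ℝ), 0 ≤ ∫ t in (-π)..π, g t ^ 2 := fun g =>
    intervalIntegral.integral_nonneg hle (fun t _ => sq_nonneg _)
  have hIa0 := nn a; have hIb0 := nn b; have hIc0 := nn c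
  have hIp0 := nn p; have hIq0 := nn q; have hIr0 := nn r
  -- mean of a equals integral of q, using periodicity of b
  have hbper : b π = b (-π) := by
    have h1 : u π = u (-π) := by
      have := hper (-π); rwa [show -π + 2 * π = π by ring] at this
    simp [hb, h1, Real.sin_pi, Real.cos_pi]
  have hmean : (∫ t in (-π)..π, a t) = ∫ t in (-π)..π, q t := by
    have hftc : (∫ t in (-π)..π, (q t - a t)) = b π - b (-π) :=
      intervalIntegral.integral_eq_sub_of_hasDerivAt (fun t _ => hdb t)
        ((cq.sub ca).intervalIntegrable _ _)
    rw [hbper, sub_self] at hftc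
    rw [intervalIntegral.integral_sub (cq.intervalIntegrable _ _)
      (ca.intervalIntegrable _ _)] at hftc
    linarith
  -- Poincaré estimate for a
  have hpoin := poincare_aux a (fun t => p t + b t) (cp.add cb) hda
  have hsum2 : (∫ t in (-π)..π, (p t + b t) ^ 2) ≤ 2 * Ip + 2 * Ib := by
    have hpw : ∀ t ∈ Icc (-π) π, (p t + b t) ^ 2 ≤ 2 * p t ^ 2 + 2 * b t ^ 2 := by
      intro t _; nlinarith [sq_nonneg (p t - b t)]
    calc (∫ t in (-π)..π, (p t + b t) ^ 2)
        ≤ ∫ t in (-π)..π, (2 * p t ^ 2 + 2 * b t ^ 2) := by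
          apply intervalIntegral.integral_mono_on hle
            (((cp.add cb).pow 2).intervalIntegrable _ _)
            (((continuous_const.mul (cp.pow 2)).add
              (continuous_const.mul (cb.pow 2))).intervalIntegrable _ _) hpw
      _ = 2 * Ip + 2 * Ib := by
          rw [intervalIntegral.integral_add (f := fun t => 2 * p t ^ 2) (g := fun t => 2 * b t ^ 2) ((continuous_const.mul (cp.pow 2)).intervalIntegrable _ _)
            ((continuous_const.mul (cb.pow 2)).intervalIntegrable _ _),
            intervalIntegral.integral_const_mul, intervalIntegral.integral_const_mul]
  have hmeansq : (∫ t in (-π)..π, a t) ^ 2 / (2 * π) ≤ Iq := by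
    rw [hmean, div_le_iff₀ (by positivity)]
    have := sq_integral_le q cq
    linarith
  have hIa_le : Ia ≤ 8 * π ^ 2 * Ip + 8 * π ^ 2 * Ib + Iq := by
    have h1 : 4 * π ^ 2 * (∫ t in (-π)..π, (p t + b t) ^ 2)
        ≤ 4 * π ^ 2 * (2 * Ip + 2 * Ib) :=
      mul_le_mul_of_nonneg_left hsum2 (by positivity)
    have h2 : 4 * π ^ 2 * (2 * Ip + 2 * Ib) = 8 * π ^ 2 * Ip + 8 * π ^ 2 * Ib := by ring
    linarith [hpoin, hmeansq]
  -- final assembly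
  rw [eqS, eqD, eqX]
  constructor
  · -- lower bound
    have hSD : (Ia + Ib + Ic) + (Ip + Iq + Ir) ≤ K * ((Ip + Iq + Ir) + (Ib + Ic)) := by
      have hexpand : K * ((Ip + Iq + Ir) + (Ib + Ic))
          = 8 * π ^ 2 * Ip + 8 * π ^ 2 * Iq + 8 * π ^ 2 * Ir + 8 * π ^ 2 * Ib
            + 8 * π ^ 2 * Ic + Ip + Iq + Ir + Ib + Ic := by rw [hK]; ring
      have n1 : 0 ≤ π ^ 2 * Iq := mul_nonneg (sq_nonneg π) hIq0
      have n2 : 0 ≤ π ^ 2 * Ir := mul_nonneg (sq_nonneg π) hIr0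
      have n3 : 0 ≤ π ^ 2 * Ic := mul_nonneg (sq_nonneg π) hIc0
      have hpi2 : (1:ℝ) ≤ π ^ 2 := by nlinarith [Real.pi_gt_three]
      have n4 : 0 ≤ (8 * π ^ 2 - 1) * Iq :=
        mul_nonneg (by linarith) hIq0
      linarith [hIa_le]
    have step : m / K * ((Ia + Ib + Ic) + (Ip + Iq + Ir))
        ≤ m / K * (K * ((Ip + Iq + Ir) + (Ib + Ic))) :=
      mul_le_mul_of_nonneg_left hSD (by positivity)
    have heq : m / K * (K * ((Ip + Iq + Ir) + (Ib + Ic)))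
        = m * ((Ip + Iq + Ir) + (Ib + Ic)) := by
      field_simp
    have hm1 : m ≤ 1 := min_le_left _ _
    have hm2 : m ≤ κ ^ 2 := min_le_right _ _
    have t1 : m * (Ip + Iq + Ir) ≤ 1 * (Ip + Iq + Ir) :=
      mul_le_mul_of_nonneg_right hm1 (by linarith)
    have t2 : m * (Ib + Ic) ≤ κ ^ 2 * (Ib + Ic) :=
      mul_le_mul_of_nonneg_right hm2 (by linarith)
    linarith [step, heq, t1, t2]
  · -- upper bound
    have h1 : (1:ℝ) ≤ max 1 (κ ^ 2) := le_max_left _ _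
    have h2 : κ ^ 2 ≤ max 1 (κ ^ 2) := le_max_right _ _
    have t3 : κ ^ 2 * (Ib + Ic) ≤ max 1 (κ ^ 2) * (Ib + Ic) :=
      mul_le_mul_of_nonneg_right h2 (by linarith)
    have t4 : 1 * (Ip + Iq + Ir) ≤ max 1 (κ ^ 2) * (Ip + Iq + Ir) :=
      mul_le_mul_of_nonneg_right h1 (by linarith)
    have t5 : 0 ≤ max 1 (κ ^ 2) * Ia :=
      mul_nonneg (by linarith) hIa0
    linarith [t3, t4, t5]
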